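/- Let d ≥ 1, let Q be an invertible real d×d matrix, let M satisfy the commutation condition Mᵀ(QᵀQ)⁻¹ = (QᵀQ)⁻¹M, let v, w be symmetric real d×d matrices, let R be symmetric with R·R = v̄, suppose R·cosh(Rt) + w̄·sinh(Rt) is invertible for every t ∈ [0,T], and suppose moreover that det(exp(−Mt)·(cosh(Rt) + sinh(Rt)·k(t))) > 0 for every t ∈ [0,T]. Let α be a real number, let ψ(t) := (QᵀQ)⁻¹M/2 − Q⁻¹·R·k(t)·(Qᵀ)⁻¹/2, and define φ(t) := −(α/2)·log(det(exp(−Mt)·(cosh(Rt) + sinh(Rt)·k(t)))). Then φ(0) = 0 and, for every t ∈ [0,T], φ is differentiable at t with φ′(t) = α·Tr[QᵀQ·ψ(t)]. -/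

import Mathlib

open Matrix NormedSpace

attribute [local instance] Matrix.linftyOpNormedRing Matrix.linftyOpNormedAlgebra

/-- `cosh` of a square matrix. -/
noncomputable def mcosh {d : ℕ} (X : Matrix (Fin d) (Fin d) ℝ) : Matrix (Fin d) (Fin d) ℝ :=
  (2:ℝ)⁻¹ • (exp X + exp (-X))

/-- `sinh` of a square matrix. -/
noncomputable def msinh {d : ℕ} (X : Matrix (Fin d) (Fin d) ℝ) : Matrix (Fin d) (Fin d) ℝ :=
  (2:ℝ)⁻¹ • (exp X - exp (-X))

/-- entry as a continuous linear map -/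
noncomputable def entryCLM (d : ℕ) (i j : Fin d) : Matrix (Fin d) (Fin d) ℝ →L[ℝ] ℝ :=
  LinearMap.toContinuousLinearMap
    { toFun := fun A => A i j, map_add' := fun _ _ => rfl, map_smul' := fun _ _ => rfl }

theorem hasDerivAt_entry {d : ℕ} {X : ℝ → Matrix (Fin d) (Fin d) ℝ}
    {X' : Matrix (Fin d) (Fin d) ℝ} {t : ℝ} (h : HasDerivAt X X' t) (i j : Fin d) :
    HasDerivAt (fun s => X s i j) (X' i j) t :=
  (entryCLM d i j).hasFDerivAt.comp_hasDerivAt t h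

theorem jac {d : ℕ} {X : ℝ → Matrix (Fin d) (Fin d) ℝ} {X' : Matrix (Fin d) (Fin d) ℝ} {t : ℝ}
    (h : ∀ i j, HasDerivAt (fun s => X s i j) (X' i j) t) :
    HasDerivAt (fun s => (X s).det) ((X t).adjugate * X').trace t := by
  have key : ∀ σ : Equiv.Perm (Fin d), HasDerivAt (fun s => ∏ i, X s (σ i) i)
      (∑ i, (∏ j ∈ Finset.univ.erase i, X t (σ j) j) * X' (σ i) i) t := by
    intro σ
    simpa [smul_eq_mul] using
      HasDerivAt.fun_finsetProd (u := Finset.univ) (f := fun i s => X s (σ i) i)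
        (f' := fun i => X' (σ i) i) (fun i _ => h (σ i) i)
  have H : HasDerivAt (fun s => ∑ σ : Equiv.Perm (Fin d),
      ((Equiv.Perm.sign σ : ℤ) : ℝ) * ∏ i, X s (σ i) i)
      (∑ σ : Equiv.Perm (Fin d), ((Equiv.Perm.sign σ : ℤ) : ℝ) *
        ∑ i, (∏ j ∈ Finset.univ.erase i, X t (σ j) j) * X' (σ i) i) t :=
    HasDerivAt.fun_sum (fun σ _ => (key σ).const_mul _)
  have hfun : (fun s => ∑ σ : Equiv.Perm (Fin d),
      ((Equiv.Perm.sign σ : ℤ) : ℝ) * ∏ i, X s (σ i) i) = fun s => (X s).det := by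
    funext s; rw [Matrix.det_apply']
  rw [hfun] at H
  convert H using 1
  -- value equality
  have upd : ∀ i : Fin d, ((X t).updateCol i (fun r => X' r i)).det
      = ∑ σ : Equiv.Perm (Fin d), ((Equiv.Perm.sign σ : ℤ) : ℝ) *
        ((∏ j ∈ Finset.univ.erase i, X t (σ j) j) * X' (σ i) i) := by
    intro i
    rw [Matrix.det_apply']
    refine Finset.sum_congr rfl fun σ _ => ?_
    congr 1
    rw [← Finset.mul_prod_erase (a := i) _ _ (Finset.mem_univ i)]
    rw [mul_comm]
    congr 1
    · refine Finset.prod_congr rfl fun j hj => ?_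
      rw [Matrix.updateCol_apply, if_neg (Finset.ne_of_mem_erase hj)]
    · rw [Matrix.updateCol_apply, if_pos rfl]
  have tr : ((X t).adjugate * X').trace = ∑ i, ((X t).updateCol i (fun r => X' r i)).det := by
    simp only [Matrix.trace, Matrix.diag, Matrix.mul_apply]
    refine Finset.sum_congr rfl fun i _ => ?_
    have := Matrix.cramer_eq_adjugate_mulVec (X t) (fun r => X' r i)
    have h2 := congrFun this i
    rw [Matrix.cramer_apply] at h2
    rw [h2, Matrix.mulVec, dotProduct]
  rw [tr]
  simp_rw [Finset.mul_sum, upd]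
  exact Finset.sum_comm

theorem hasDerivAt_matinv {d : ℕ} {A : ℝ → Matrix (Fin d) (Fin d) ℝ}
    {A' : Matrix (Fin d) (Fin d) ℝ} {t : ℝ} (hA : HasDerivAt A A' t) (hu : IsUnit (A t)) :
    HasDerivAt (fun s => (A s)⁻¹) (-((A t)⁻¹ * A' * (A t)⁻¹)) t := by
  have h1 := hasFDerivAt_ringInverse (𝕜 := ℝ) hu.unit
  rw [hu.unit_spec] at h1
  have h2 := h1.comp_hasDerivAt t hA
  simp only [ContinuousLinearMap.neg_apply, ContinuousLinearMap.mulLeftRight_apply] at h2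
  have hc : (↑hu.unit⁻¹ : Matrix (Fin d) (Fin d) ℝ) = (A t)⁻¹ := by
    rw [Matrix.coe_units_inv, hu.unit_spec]
  rw [hc] at h2
  simp only [Function.comp_def, ← Matrix.nonsing_inv_eq_ringInverse] at h2
  exact h2

theorem hasDerivAt_mcosh {d : ℕ} (R : Matrix (Fin d) (Fin d) ℝ) (t : ℝ) :
    HasDerivAt (fun u : ℝ => mcosh (u • R)) (R * msinh (t • R)) t := by
  have h1 := hasDerivAt_exp_smul_const' (𝕂 := ℝ) R t
  have h2 := hasDerivAt_exp_smul_const' (𝕂 := ℝ) (-R) t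
  have h3 := (h1.fun_add h2).fun_const_smul ((2:ℝ)⁻¹)
  have hf : (fun u : ℝ => (2:ℝ)⁻¹ • (exp (u • R) + exp (u • (-R))))
      = fun u : ℝ => mcosh (u • R) := by
    funext u; rw [mcosh, smul_neg]
  rw [← hf]
  refine h3.congr_deriv ?_
  rw [msinh, smul_neg, mul_smul_comm, mul_sub, neg_mul, sub_eq_add_neg]
  rfl

theorem hasDerivAt_msinh {d : ℕ} (R : Matrix (Fin d) (Fin d) ℝ) (t : ℝ) :
    HasDerivAt (fun u : ℝ => msinh (u • R)) (R * mcosh (t • R)) t := by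
  have h1 := hasDerivAt_exp_smul_const' (𝕂 := ℝ) R t
  have h2 := hasDerivAt_exp_smul_const' (𝕂 := ℝ) (-R) t
  have h3 := (h1.fun_sub h2).fun_const_smul ((2:ℝ)⁻¹)
  have hf : (fun u : ℝ => (2:ℝ)⁻¹ • (exp (u • R) - exp (u • (-R))))
      = fun u : ℝ => msinh (u • R) := by
    funext u; rw [msinh, smul_neg]
  rw [← hf]
  refine h3.congr_deriv ?_
  rw [mcosh, smul_neg, mul_smul_comm, mul_add, neg_mul, sub_neg_eq_add]
  rfl

theorem commute_mcosh {d : ℕ} (R X : Matrix (Fin d) (Fin d) ℝ) (h : Commute X R) (t : ℝ) :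
    Commute X (mcosh (t • R)) := by
  have h1 : Commute X (exp (t • R)) := (h.smul_right t).exp_right
  have h2 : Commute X (exp (-(t • R))) := ((h.smul_right t).neg_right).exp_right
  exact (h1.add_right h2).smul_right _

theorem commute_msinh {d : ℕ} (R X : Matrix (Fin d) (Fin d) ℝ) (h : Commute X R) (t : ℝ) :
    Commute X (msinh (t • R)) := by
  have h1 : Commute X (exp (t • R)) := (h.smul_right t).exp_right
  have h2 : Commute X (exp (-(t • R))) := ((h.smul_right t).neg_right).exp_right
  exact (h1.sub_right h2).smul_right _

theorem core {d : ℕ} (t : ℝ) (Rm Mm wbar : Matrix (Fin d) (Fin d) ℝ)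
    (k c s E : ℝ → Matrix (Fin d) (Fin d) ℝ)
    (hc : HasDerivAt c (Rm * s t) t) (hs : HasDerivAt s (Rm * c t) t)
    (hRc : Commute Rm (c t)) (hRs : Commute Rm (s t))
    (hk : ∀ u, k u = -((Rm * c u + wbar * s u)⁻¹ * (Rm * s u + wbar * c u)))
    (hE : HasDerivAt E (-Mm * E t) t)
    (hME : Commute Mm (E t)) (hEu : IsUnit (E t).det)
    (hA : IsUnit (Rm * c t + wbar * s t))
    (hdet : 0 < ((E t) * (c t + s t * k t)).det) :
    HasDerivAt (fun u => Real.log ((E u * (c u + s u * k u)).det))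
      ((Rm * k t).trace - Mm.trace) t := by
  have hAdet : IsUnit (Rm * c t + wbar * s t).det := (Matrix.isUnit_iff_isUnit_det _).mp hA
  -- derivative of A
  have hA' : HasDerivAt (fun u => Rm * c u + wbar * s u)
      ((Rm * s t + wbar * c t) * Rm) t := by
    have h := (HasDerivAt.const_mul Rm hc).fun_add (HasDerivAt.const_mul wbar hs)
    refine h.congr_deriv ?_
    rw [add_mul, mul_assoc, mul_assoc, ← hRs.eq, ← hRc.eq]
  have hB' : HasDerivAt (fun u => Rm * s u + wbar * c u)
      ((Rm * c t + wbar * s t) * Rm) t := by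
    have h := (HasDerivAt.const_mul Rm hs).fun_add (HasDerivAt.const_mul wbar hc)
    refine h.congr_deriv ?_
    rw [add_mul, mul_assoc, mul_assoc, ← hRs.eq, ← hRc.eq]
  -- derivative of k
  have hkd : HasDerivAt k (k t * Rm * k t - Rm) t := by
    have hi := hasDerivAt_matinv hA' hA
    have hm := (hi.fun_mul hB').fun_neg
    have hfun : (fun u => -((Rm * c u + wbar * s u)⁻¹ * (Rm * s u + wbar * c u))) = k := by
      funext u; rw [hk u]
    rw [hfun] at hm
    refine hm.congr_deriv ?_
    have h1 : (Rm * c t + wbar * s t)⁻¹ * ((Rm * c t + wbar * s t) * Rm) = Rm :=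
      Matrix.nonsing_inv_mul_cancel_left _ _ hAdet
    rw [h1, hk t]
    noncomm_ring
  -- derivative of G
  have hG' : HasDerivAt (fun u => c u + s u * k u) ((c t + s t * k t) * (Rm * k t)) t := by
    have h := hc.fun_add (hs.fun_mul hkd)
    refine h.congr_deriv ?_
    rw [hRs.eq, hRc.eq]
    noncomm_ring
  -- derivative of F
  have hF' : HasDerivAt (fun u => E u * (c u + s u * k u))
      (-Mm * E t * (c t + s t * k t) + E t * ((c t + s t * k t) * (Rm * k t))) t := hE.fun_mul hG'
  -- derivative of det
  have hdd := jac (fun i j => hasDerivAt_entry hF' i j)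
  have hlog := (Real.hasDerivAt_log (ne_of_gt hdet)).comp t hdd
  refine hlog.congr_deriv ?_
  -- now pure algebra on values
  set G := c t + s t * k t with hGdef
  set Et := E t with hEtdef
  set f := Et * G with hfdef
  set F' := -Mm * Et * G + Et * (G * (Rm * k t)) with hF'def
  have hdf : f.det ≠ 0 := ne_of_gt hdet
  have hdG : IsUnit G.det := by
    refine isUnit_iff_ne_zero.mpr ?_
    intro h0
    rw [hfdef, Matrix.det_mul, h0, mul_zero] at hdf
    exact hdf rfl
  have hadj : f.adjugate = f.det • f⁻¹ := by
    rw [Matrix.inv_def, smul_smul, Ring.inverse_eq_inv', mul_inv_cancel₀ hdf, one_smul]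
  have htr : (f.adjugate * F').trace = f.det * (f⁻¹ * F').trace := by
    rw [hadj, Matrix.smul_mul, Matrix.trace_smul, smul_eq_mul]
  rw [htr, inv_mul_cancel_left₀ hdf]
  -- trace computation
  have hfinv : f⁻¹ = G⁻¹ * Et⁻¹ := Matrix.mul_inv_rev _ _
  have hsplit : f⁻¹ * F' = G⁻¹ * Et⁻¹ * (-Mm * Et * G) + G⁻¹ * Et⁻¹ * (Et * (G * (Rm * k t))) := by
    rw [hfinv, hF'def, mul_add]
  have h2 : G⁻¹ * Et⁻¹ * (Et * (G * (Rm * k t))) = G⁻¹ * (G * (Rm * k t)) := by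
    rw [mul_assoc (G⁻¹) (Et⁻¹), Matrix.nonsing_inv_mul_cancel_left _ _ hEu]
  have h2' : G⁻¹ * (G * (Rm * k t)) = Rm * k t := Matrix.nonsing_inv_mul_cancel_left _ _ hdG
  have h1 : -Mm * Et * G = Et * (-Mm * G) := by
    rw [neg_mul, neg_mul, hME.eq, mul_assoc, ← mul_neg, ← neg_mul]
  have h1' : G⁻¹ * Et⁻¹ * (-Mm * Et * G) = G⁻¹ * (-Mm * G) := by
    rw [h1, mul_assoc (G⁻¹) (Et⁻¹), Matrix.nonsing_inv_mul_cancel_left _ _ hEu]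
  have h1tr : (G⁻¹ * (-Mm * G)).trace = -Mm.trace := by
    rw [Matrix.trace_mul_comm, mul_assoc, Matrix.mul_nonsing_inv _ hdG, mul_one,
      Matrix.trace_neg]
  rw [hsplit, Matrix.trace_add, h1', h2, h2', h1tr]
  ring

theorem hasDerivAt_expneg {d : ℕ} (M : Matrix (Fin d) (Fin d) ℝ) (t : ℝ) :
    HasDerivAt (fun u : ℝ => exp (-(u • M))) (-M * exp (-(t • M))) t := by
  have h := hasDerivAt_exp_smul_const' (𝕂 := ℝ) (-M) t
  have hf : (fun u : ℝ => exp (u • (-M))) = fun u : ℝ => exp (-(u • M)) := by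
    funext u; rw [smul_neg]
  rw [← hf, ← smul_neg]
  exact h

theorem stmt_1 (d : ℕ) (hd : 1 ≤ d) (T : ℝ) (hT : 0 < T) (α : ℝ)
    (Q M v w R : Matrix (Fin d) (Fin d) ℝ)
    (hQ : IsUnit Q)
    (hM : Mᵀ * (Qᵀ * Q)⁻¹ = (Qᵀ * Q)⁻¹ * M)
    (hv : v.IsSymm) (hw : w.IsSymm) (hR : R.IsSymm)
    (vbar wbar : Matrix (Fin d) (Fin d) ℝ)
    (hvbar : vbar = Q * ((2:ℝ) • v + Mᵀ * (Qᵀ * Q)⁻¹ * M) * Qᵀ)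
    (hwbar : wbar = Q * ((2:ℝ) • w - (Qᵀ * Q)⁻¹ * M) * Qᵀ)
    (hRR : R * R = vbar)
    (hinv : ∀ t ∈ Set.Icc (0:ℝ) T, IsUnit (R * mcosh (t • R) + wbar * msinh (t • R)))
    (k ψ : ℝ → Matrix (Fin d) (Fin d) ℝ)
    (hk : ∀ t, k t = -((R * mcosh (t • R) + wbar * msinh (t • R))⁻¹ *
      (R * msinh (t • R) + wbar * mcosh (t • R))))
    (hψ : ∀ t, ψ t = (2:ℝ)⁻¹ • ((Qᵀ * Q)⁻¹ * M) - (2:ℝ)⁻¹ • (Q⁻¹ * R * k t * Qᵀ⁻¹))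
    (hdet : ∀ t ∈ Set.Icc (0:ℝ) T,
      0 < (exp (-(t • M)) * (mcosh (t • R) + msinh (t • R) * k t)).det)
    (φ : ℝ → ℝ)
    (hφ : ∀ t, φ t = -(α / 2) *
      Real.log (exp (-(t • M)) * (mcosh (t • R) + msinh (t • R) * k t)).det) :
    φ 0 = 0 ∧ ∀ t ∈ Set.Icc (0:ℝ) T,
      HasDerivAt φ (α * ((Qᵀ * Q) * ψ t).trace) t := by
  constructor
  · rw [hφ 0]
    have h1 : mcosh ((0:ℝ) • R) = 1 := by
      rw [zero_smul, mcosh, neg_zero, exp_zero, ← two_smul ℝ (1 : Matrix (Fin d) (Fin d) ℝ),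
        smul_smul]
      norm_num
    have h2 : msinh ((0:ℝ) • R) = 0 := by
      rw [zero_smul, msinh, neg_zero, exp_zero, sub_self, smul_zero]
    rw [h1, h2, zero_mul, add_zero, zero_smul, neg_zero, exp_zero, one_mul,
      Matrix.det_one, Real.log_one, mul_zero]
  intro t ht
  have hcore := core t R M wbar k (fun u => mcosh (u • R)) (fun u => msinh (u • R))
    (fun u => exp (-(u • M)))
    (hasDerivAt_mcosh R t) (hasDerivAt_msinh R t)
    (commute_mcosh R R (Commute.refl R) t) (commute_msinh R R (Commute.refl R) t)
    hk (hasDerivAt_expneg M t)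
    ((((Commute.refl M).smul_right t).neg_right).exp_right)
    ((Matrix.isUnit_iff_isUnit_det _).mp (NormedSpace.isUnit_exp _))
    (hinv t ht) (hdet t ht)
  have hφd := HasDerivAt.const_mul (-(α/2)) hcore
  have hφfun : (fun u => -(α/2) * Real.log
      ((exp (-(u • M)) * (mcosh (u • R) + msinh (u • R) * k u)).det)) = φ := by
    funext u; rw [hφ u]
  rw [hφfun] at hφd
  refine hφd.congr_deriv (Eq.symm ?_)
  -- scalar identity
  have hQd : IsUnit Q.det := (Matrix.isUnit_iff_isUnit_det Q).mp hQ
  have hQtd : IsUnit Qᵀ.det := by rwa [Matrix.det_transpose]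
  have hQQt : IsUnit (Qᵀ * Q).det := by rw [Matrix.det_mul]; exact hQtd.mul hQd
  have e1 : Qᵀ * Q * ((Qᵀ * Q)⁻¹ * M) = M := Matrix.mul_nonsing_inv_cancel_left _ _ hQQt
  have e2 : (Qᵀ * Q * (Q⁻¹ * R * k t * Qᵀ⁻¹)).trace = (R * k t).trace := by
    have : Qᵀ * Q * (Q⁻¹ * R * k t * Qᵀ⁻¹) = Qᵀ * (R * k t * Qᵀ⁻¹) := by
      rw [show Q⁻¹ * R * k t * Qᵀ⁻¹ = Q⁻¹ * (R * k t * Qᵀ⁻¹) by noncomm_ring,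
        Matrix.mul_assoc Qᵀ Q, Matrix.mul_nonsing_inv_cancel_left _ _ hQd]
    rw [this, Matrix.trace_mul_comm, mul_assoc, mul_assoc, Matrix.nonsing_inv_mul _ hQtd,
      mul_one]
  rw [hψ t, mul_sub, Matrix.mul_smul, Matrix.mul_smul, Matrix.trace_sub, Matrix.trace_smul,
    Matrix.trace_smul, e1, e2, smul_eq_mul, smul_eq_mul]
  ring
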